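/- Let Ω ⊂ ℝ^d be a measurable set of finite positive measure, let Ψ : Ω → ℝ be integrable, let L ∈ (0,1), and let a₁ = 𝟙_{ω*} where ω* = {x ∈ Ω : Ψ(x) > μ*} for some μ* ∈ ℝ with |ω*| = L|Ω|. Suppose there exists M > 0 such that for all δ > 0, the Lebesgue measure of {x ∈ Ω : |Ψ(x) − μ*| < δ} is at most M·δ. Then for every measurable a : Ω → [0,1] with ∫_Ω a = L|Ω|, one has ∫_Ω (a − a₁)·Ψ ≤ −(1/(4M))·‖a − a₁‖²_{L¹(Ω)}. -/

import Mathlib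

open MeasureTheory Set

theorem stmt_0 {d : ℕ} (Ω : Set (Fin d → ℝ)) (hΩ : MeasurableSet Ω)
    (hfin : volume Ω < ⊤) (hpos : 0 < volume Ω)
    (Ψ : (Fin d → ℝ) → ℝ) (hΨ : IntegrableOn Ψ Ω)
    (L : ℝ) (hL : L ∈ Set.Ioo (0:ℝ) 1) (μstar : ℝ)
    (hmeasω : volume {x | x ∈ Ω ∧ μstar < Ψ x} = ENNReal.ofReal (L * (volume Ω).toReal))
    (M : ℝ) (hM : 0 < M)
    (hband : ∀ δ : ℝ, 0 < δ → volume {x | x ∈ Ω ∧ |Ψ x - μstar| < δ} ≤ ENNReal.ofReal (M * δ))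
    (a : (Fin d → ℝ) → ℝ) (ha_meas : Measurable a)
    (ha01 : ∀ x, a x ∈ Set.Icc (0:ℝ) 1)
    (haint : ∫ x in Ω, a x = L * (volume Ω).toReal) :
    ∫ x in Ω, (a x - Set.indicator {x | x ∈ Ω ∧ μstar < Ψ x} (fun _ => (1:ℝ)) x) * Ψ x ≤
      -(1/(4*M)) *
        (∫ x in Ω, |a x - Set.indicator {x | x ∈ Ω ∧ μstar < Ψ x} (fun _ => (1:ℝ)) x|)^2 := by
  obtain ⟨hL0, hL1⟩ := hL
  have hfinμ : IsFiniteMeasure (volume.restrict Ω) :=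
    ⟨by rwa [Measure.restrict_apply_univ]⟩
  set A : ℝ := (volume Ω).toReal with hA
  have hA0 : 0 < A := ENNReal.toReal_pos hpos.ne' hfin.ne
  have hLA : 0 ≤ L * A := by positivity
  -- measurable version of Ψ
  have hae : AEStronglyMeasurable Ψ (volume.restrict Ω) := hΨ.aestronglyMeasurable
  set Ψ' : (Fin d → ℝ) → ℝ := hae.mk Ψ with hΨ'def
  have hΨ'meas : Measurable Ψ' := hae.stronglyMeasurable_mk.measurable
  have hΨae : Ψ =ᵐ[volume.restrict Ω] Ψ' := hae.ae_eq_mk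
  set ω : Set (Fin d → ℝ) := {x | x ∈ Ω ∧ μstar < Ψ x} with hωdef
  set ω' : Set (Fin d → ℝ) := Ω ∩ {x | μstar < Ψ' x} with hω'def
  have hω'meas : MeasurableSet ω' :=
    hΩ.inter (measurableSet_lt measurable_const hΨ'meas)
  -- the global null set where Ψ ≠ Ψ'
  have hN : volume ({x | Ψ x ≠ Ψ' x} ∩ Ω) = 0 := by
    have := hΨae
    rw [Filter.EventuallyEq, ae_iff, Measure.restrict_apply' hΩ] at this
    exact this
  -- volume ω' = volume ω
  have hωω' : volume ω' = volume ω := by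
    apply le_antisymm
    · calc volume ω' ≤ volume (ω ∪ ({x | Ψ x ≠ Ψ' x} ∩ Ω)) := by
            apply measure_mono
            intro x hx
            rcases eq_or_ne (Ψ x) (Ψ' x) with h | h
            · exact Or.inl ⟨hx.1, by show μstar < Ψ x; rw [h]; exact hx.2⟩
            · exact Or.inr ⟨h, hx.1⟩
          _ ≤ volume ω + volume ({x | Ψ x ≠ Ψ' x} ∩ Ω) := measure_union_le _ _
          _ = volume ω := by rw [hN, add_zero]
    · calc volume ω ≤ volume (ω' ∪ ({x | Ψ x ≠ Ψ' x} ∩ Ω)) := by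
            apply measure_mono
            intro x hx
            rcases eq_or_ne (Ψ x) (Ψ' x) with h | h
            · exact Or.inl ⟨hx.1, by show μstar < Ψ' x; rw [← h]; exact hx.2⟩
            · exact Or.inr ⟨h, hx.1⟩
          _ ≤ volume ω' + volume ({x | Ψ x ≠ Ψ' x} ∩ Ω) := measure_union_le _ _
          _ = volume ω' := by rw [hN, add_zero]
  have hω'vol : volume ω' = ENNReal.ofReal (L * A) := hωω'.trans hmeasω
  -- band bound for Ψ'
  have hband' : ∀ δ : ℝ, 0 < δ →
      volume (Ω ∩ {x | |Ψ' x - μstar| < δ}) ≤ ENNReal.ofReal (M * δ) := by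
    intro δ hδ
    calc volume (Ω ∩ {x | |Ψ' x - μstar| < δ})
        ≤ volume ({x | x ∈ Ω ∧ |Ψ x - μstar| < δ} ∪ ({x | Ψ x ≠ Ψ' x} ∩ Ω)) := by
          apply measure_mono
          intro x hx
          rcases eq_or_ne (Ψ x) (Ψ' x) with h | h
          · exact Or.inl ⟨hx.1, by show |Ψ x - μstar| < _; rw [h]; exact hx.2⟩
          · exact Or.inr ⟨h, hx.1⟩
      _ ≤ volume {x | x ∈ Ω ∧ |Ψ x - μstar| < δ} + volume ({x | Ψ x ≠ Ψ' x} ∩ Ω) :=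
          measure_union_le _ _
      _ = volume {x | x ∈ Ω ∧ |Ψ x - μstar| < δ} := by rw [hN, add_zero]
      _ ≤ ENNReal.ofReal (M * δ) := hband δ hδ
  -- indicators a.e. equal
  have hindae : (fun x => Set.indicator ω (fun _ => (1:ℝ)) x)
      =ᵐ[volume.restrict Ω] (fun x => Set.indicator ω' (fun _ => (1:ℝ)) x) := by
    filter_upwards [hΨae] with x hx
    have : x ∈ ω ↔ x ∈ ω' := by
      simp only [hωdef, hω'def, mem_setOf_eq, mem_inter_iff, hx]
    by_cases h : x ∈ ω
    · rw [Set.indicator_of_mem h, Set.indicator_of_mem (this.mp h)]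
    · rw [Set.indicator_of_notMem h, Set.indicator_of_notMem (fun h' => h (this.mpr h'))]
  -- the function g
  set g : (Fin d → ℝ) → ℝ := fun x => a x - Set.indicator ω' (fun _ => (1:ℝ)) x with hgdef
  have hgmeas : Measurable g := ha_meas.sub (measurable_const.indicator hω'meas)
  have hgabs : ∀ x, |g x| ≤ 1 := by
    intro x
    obtain ⟨h0, h1⟩ := ha01 x
    by_cases h : x ∈ ω'
    · rw [hgdef]; simp only [Set.indicator_of_mem h]
      rw [abs_le]; constructor <;> linarith
    · rw [hgdef]; simp only [Set.indicator_of_notMem h]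
      rw [abs_le]; constructor <;> linarith
  have hgint : Integrable g (volume.restrict Ω) := by
    apply Integrable.mono' (integrable_const 1) hgmeas.aestronglyMeasurable
    exact ae_of_all _ fun x => by rw [Real.norm_eq_abs]; exact hgabs x
  have hΨ'int : Integrable Ψ' (volume.restrict Ω) := hΨ.congr hΨae
  have haint' : Integrable a (volume.restrict Ω) := by
    apply Integrable.mono' (integrable_const 1) ha_meas.aestronglyMeasurable
    refine ae_of_all _ fun x => ?_
    rw [Real.norm_eq_abs, abs_le]
    obtain ⟨h0, h1⟩ := ha01 x
    exact ⟨by linarith, h1⟩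
  have hindint : Integrable (fun x => Set.indicator ω' (fun _ => (1:ℝ)) x)
      (volume.restrict Ω) := by
    apply Integrable.mono' (integrable_const 1)
      ((measurable_const.indicator hω'meas)).aestronglyMeasurable
    refine ae_of_all _ fun x => ?_
    rw [Real.norm_eq_abs]
    by_cases h : x ∈ ω' <;> simp [Set.indicator_of_mem, Set.indicator_of_notMem, h]
  -- ∫ indicator = L * A
  have hindval : ∫ x in Ω, Set.indicator ω' (fun _ => (1:ℝ)) x = L * A := by
    rw [setIntegral_indicator hω'meas]
    have : Ω ∩ ω' = ω' := Set.inter_eq_self_of_subset_right Set.inter_subset_left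
    rw [this, setIntegral_const, smul_eq_mul, mul_one, measureReal_def, hω'vol, ENNReal.toReal_ofReal hLA]
  -- ∫ g = 0
  have hg0 : ∫ x in Ω, g x = 0 := by
    rw [hgdef]
    rw [integral_sub haint' hindint, haint, hindval, sub_self]
  -- rewrite goal via Ψ', ω'
  have hLHS : ∫ x in Ω, (a x - Set.indicator ω (fun _ => (1:ℝ)) x) * Ψ x
      = ∫ x in Ω, g x * Ψ' x := by
    apply integral_congr_ae
    filter_upwards [hΨae, hindae] with x h1 h2
    rw [hgdef]; simp only [h1, h2]
  have hT : ∫ x in Ω, |a x - Set.indicator ω (fun _ => (1:ℝ)) x| = ∫ x in Ω, |g x| := by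
    apply integral_congr_ae
    filter_upwards [hindae] with x h2
    rw [hgdef]; simp only [h2]
  set T : ℝ := ∫ x in Ω, |g x| with hTdef
  have hT0 : 0 ≤ T := integral_nonneg fun x => abs_nonneg _
  -- integrability of products
  have hprod : Integrable (fun x => g x * Ψ' x) (volume.restrict Ω) :=
    hΨ'int.bdd_mul (c := 1) hgmeas.aestronglyMeasurable (ae_of_all _ fun x => by
      rw [Real.norm_eq_abs]; exact hgabs x)
  have hΨ'sub : Integrable (fun x => Ψ' x - μstar) (volume.restrict Ω) :=
    hΨ'int.sub (integrable_const μstar)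
  have habsint : Integrable (fun x => |g x| * |Ψ' x - μstar|) (volume.restrict Ω) := by
    have : Integrable (fun x => |Ψ' x - μstar|) (volume.restrict Ω) := hΨ'sub.abs
    exact this.bdd_mul (c := 1) (hgmeas.abs.aestronglyMeasurable) (ae_of_all _ fun x => by
      rw [Real.norm_eq_abs, abs_abs]; exact hgabs x)
  -- sign identity on Ω
  have hsign : ∀ x ∈ Ω, g x * (Ψ' x - μstar) = -(|g x| * |Ψ' x - μstar|) := by
    intro x hx
    obtain ⟨h0, h1⟩ := ha01 x
    by_cases h : μstar < Ψ' x
    · have hmem : x ∈ ω' := ⟨hx, h⟩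
      have hg : g x = a x - 1 := by rw [hgdef]; simp [Set.indicator_of_mem hmem]
      rw [hg, abs_of_nonpos (by linarith), abs_of_nonneg (by linarith : (0:ℝ) ≤ Ψ' x - μstar)]
      ring
    · have hmem : x ∉ ω' := fun hm => h hm.2
      have hg : g x = a x := by rw [hgdef]; simp [Set.indicator_of_notMem hmem]
      push_neg at h
      rw [hg, abs_of_nonneg h0, abs_of_nonpos (by linarith : Ψ' x - μstar ≤ 0)]
      ring
  -- main identity
  have hkey : ∫ x in Ω, g x * Ψ' x = -∫ x in Ω, |g x| * |Ψ' x - μstar| := by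
    have h1 : ∫ x in Ω, g x * (Ψ' x - μstar) = (∫ x in Ω, g x * Ψ' x) - μstar * ∫ x in Ω, g x := by
      have : ∀ x, g x * (Ψ' x - μstar) = g x * Ψ' x - μstar * g x := fun x => by ring
      rw [integral_congr_ae (ae_of_all _ this),
        integral_sub hprod (hgint.const_mul μstar), integral_const_mul]
    have h2 : ∫ x in Ω, g x * (Ψ' x - μstar) = -∫ x in Ω, |g x| * |Ψ' x - μstar| := by
      rw [setIntegral_congr_fun hΩ (fun x hx => hsign x hx), integral_neg]
    rw [hg0, mul_zero, sub_zero] at h1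
    rw [← h1, h2]
  -- quantitative lower bound: ∫ |g| |Ψ'-μstar| ≥ T^2/(4M)
  have hlow : T ^ 2 / (4 * M) ≤ ∫ x in Ω, |g x| * |Ψ' x - μstar| := by
    rcases eq_or_lt_of_le hT0 with hTz | hTpos
    · rw [← hTz]
      simp only [ne_eq, zero_pow, OfNat.ofNat_ne_zero, not_false_eq_true, zero_div]
      exact integral_nonneg fun x => mul_nonneg (abs_nonneg _) (abs_nonneg _)
    · set δ : ℝ := T / (2 * M) with hδdef
      have hδpos : 0 < δ := by positivity
      set S : Set (Fin d → ℝ) := Ω ∩ {x | δ ≤ |Ψ' x - μstar|} with hSdef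
      set Sc : Set (Fin d → ℝ) := Ω ∩ {x | |Ψ' x - μstar| < δ} with hScdef
      have hmeasΨ'd : Measurable fun x => |Ψ' x - μstar| := (hΨ'meas.sub measurable_const).abs
      have hSmeas : MeasurableSet S := hΩ.inter (measurableSet_le measurable_const hmeasΨ'd)
      have hScmeas : MeasurableSet Sc := hΩ.inter (measurableSet_lt hmeasΨ'd measurable_const)
      have hunion : Ω = S ∪ Sc := by
        ext x; simp only [hSdef, hScdef, mem_union, mem_inter_iff, mem_setOf_eq]
        constructor
        · intro hx; rcases le_or_gt δ (|Ψ' x - μstar|) with h | h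
          · exact Or.inl ⟨hx, h⟩
          · exact Or.inr ⟨hx, h⟩
        · rintro (⟨h, _⟩ | ⟨h, _⟩) <;> exact h
      have hdisj : Disjoint S Sc := by
        rw [Set.disjoint_left]
        rintro x ⟨-, h1⟩ ⟨-, h2⟩
        simp only [mem_setOf_eq] at h1 h2
        linarith
      have hintS : IntegrableOn (fun x => |g x|) S volume :=
        IntegrableOn.mono_set hgint.abs (by rw [hunion]; exact subset_union_left)
      have hintSc : IntegrableOn (fun x => |g x|) Sc volume :=
        IntegrableOn.mono_set hgint.abs (by rw [hunion]; exact subset_union_right)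
      have hsplit : T = (∫ x in S, |g x|) + ∫ x in Sc, |g x| := by
        rw [hTdef, hunion]
        exact setIntegral_union hdisj hScmeas hintS hintSc
      -- bound on Sc part
      have hScvol : (volume Sc).toReal ≤ M * δ := by
        apply ENNReal.toReal_le_of_le_ofReal (by positivity)
        exact hband' δ hδpos
      have hScfin : volume Sc < ⊤ :=
        lt_of_le_of_lt (measure_mono (by rw [hunion]; exact subset_union_right)) hfin
      have hScbound : ∫ x in Sc, |g x| ≤ M * δ := by
        calc ∫ x in Sc, |g x| ≤ ∫ x in Sc, (1:ℝ) := by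
              apply setIntegral_mono_on hintSc (integrableOn_const hScfin.ne) hScmeas
              intro x _; exact hgabs x
          _ = (volume Sc).toReal := by rw [setIntegral_const, smul_eq_mul, mul_one, measureReal_def]
          _ ≤ M * δ := hScvol
      have hSlow : T - M * δ ≤ ∫ x in S, |g x| := by linarith [hsplit, hScbound]
      -- lower bound the integral
      have habsS : IntegrableOn (fun x => |g x| * |Ψ' x - μstar|) S volume :=
        IntegrableOn.mono_set habsint (by rw [hunion]; exact subset_union_left)
      calc T ^ 2 / (4 * M) = δ * (T - M * δ) := by
            rw [hδdef]; field_simp; ring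
        _ ≤ δ * ∫ x in S, |g x| := by
            apply mul_le_mul_of_nonneg_left hSlow hδpos.le
        _ = ∫ x in S, δ * |g x| := by rw [integral_const_mul]
        _ ≤ ∫ x in S, |g x| * |Ψ' x - μstar| := by
            apply setIntegral_mono_on _ habsS hSmeas
            · rintro x ⟨-, hx⟩
              simp only [mem_setOf_eq] at hx
              rw [mul_comm δ (|g x|)]
              exact mul_le_mul_of_nonneg_left hx (abs_nonneg _)
            · exact hintS.const_mul δ
        _ ≤ ∫ x in Ω, |g x| * |Ψ' x - μstar| := by
            apply setIntegral_mono_set habsint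
            · exact ae_of_all _ fun x => mul_nonneg (abs_nonneg _) (abs_nonneg _)
            · exact HasSubset.Subset.eventuallyLE (by rw [hunion]; exact subset_union_left)
    -- finish
  rw [hLHS, hT, hkey]
  have : -(1 / (4 * M)) * T ^ 2 = -(T ^ 2 / (4 * M)) := by ring
  rw [this]
  linarith [hlow]
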